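/- Let P(z) = z² + z(E + iε − λ) + 1 for real E, λ and ε ≠ 0. Then P has exactly one root ξ strictly inside the unit disc and one root strictly outside, and ξ · ξ' = 1 where ξ' is the other root. Moreover, if |E−λ| > 2 and u = sign(λ−E), then as ε → 0 the inner root converges to u·e^{−γ}, where γ > 0 satisfies E = −2u cosh γ + λ. -/

import Mathlib

open Filter Topology

/-- P(z) = z² + z(E + iε − λ) + 1 has exactly one root strictly inside the unit disc
    and one strictly outside, with product 1; for |E−λ| > 2 the inner root converges
    to u e^{−γ} as ε → 0. -/
theorem stmt14 (E lam : ℝ) :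
    (∀ ε : ℝ, ε ≠ 0 →
      ∃ ξ ξ' : ℂ, ξ ≠ ξ' ∧
        ξ ^ 2 + ξ * ((E : ℂ) + ε * Complex.I - lam) + 1 = 0 ∧
        ξ' ^ 2 + ξ' * ((E : ℂ) + ε * Complex.I - lam) + 1 = 0 ∧
        ‖ξ‖ < 1 ∧ 1 < ‖ξ'‖ ∧ ξ * ξ' = 1 ∧
        ∀ z : ℂ, z ^ 2 + z * ((E : ℂ) + ε * Complex.I - lam) + 1 = 0 → z = ξ ∨ z = ξ') ∧
    (∀ γ u : ℝ, 2 < |E - lam| → 0 < γ → u = (if 0 < lam - E then 1 else -1) →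
      E = -2 * u * Real.cosh γ + lam →
      ∀ ξf : ℝ → ℂ,
        (∀ ε : ℝ, ε ≠ 0 →
          (ξf ε) ^ 2 + (ξf ε) * ((E : ℂ) + ε * Complex.I - lam) + 1 = 0 ∧
          ‖ξf ε‖ < 1) →
        Tendsto ξf (𝓝[≠] (0 : ℝ)) (𝓝 ((u : ℂ) * Real.exp (-γ)))) := by
  constructor
  · intro ε hε
    set b : ℂ := (E : ℂ) + ε * Complex.I - lam with hb
    -- no root lies on the unit circle
    have key : ∀ z : ℂ, z ^ 2 + z * b + 1 = 0 → ‖z‖ ≠ 1 := by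
      intro z hz habs
      have hz0 : z ≠ 0 := by
        intro h; rw [h] at hz; simp at hz
      have hconj : z * (starRingEnd ℂ) z = 1 := by
        rw [Complex.mul_conj]
        rw [Complex.normSq_eq_norm_sq, habs]
        norm_num
      have hbz : z * (z + b + (starRingEnd ℂ) z) = 0 := by
        have : z * (z + b + (starRingEnd ℂ) z) = z ^ 2 + z * b + z * (starRingEnd ℂ) z := by
          ring
        rw [this, hconj, hz]
      have hsum : z + b + (starRingEnd ℂ) z = 0 := by
        rcases mul_eq_zero.mp hbz with h | h
        · exact absurd h hz0
        · exact h
      have him : (z + b + (starRingEnd ℂ) z).im = 0 := by rw [hsum]; rfl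
      have : b.im = ε := by simp [hb]
      simp [Complex.add_im, Complex.conj_im, this] at him
      exact hε him
    -- construct the two roots
    obtain ⟨s, hs⟩ : ∃ s : ℂ, s ^ 2 = b ^ 2 - 4 :=
      IsAlgClosed.exists_pow_nat_eq (b ^ 2 - 4) (by norm_num)
    set ξ₀ : ℂ := (-b + s) / 2 with hξ₀
    set ξ₁ : ℂ := -b - ξ₀ with hξ₁
    have hroot₀ : ξ₀ ^ 2 + ξ₀ * b + 1 = 0 := by
      rw [hξ₀]; linear_combination (1/4 : ℂ) * hs
    have hroot₁ : ξ₁ ^ 2 + ξ₁ * b + 1 = 0 := by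
      rw [hξ₁]; linear_combination hroot₀
    have hprod : ξ₀ * ξ₁ = 1 := by
      rw [hξ₁]; linear_combination -hroot₀
    have habs01 : ‖ξ₀‖ * ‖ξ₁‖ = 1 := by
      rw [← norm_mul, hprod, norm_one]
    have hξ0ne : ξ₀ ≠ 0 := by
      intro h; rw [h] at hprod; simp at hprod
    have h0pos : 0 < ‖ξ₀‖ := norm_pos_iff.mpr hξ0ne
    have huniq : ∀ z : ℂ, z ^ 2 + z * b + 1 = 0 → z = ξ₀ ∨ z = ξ₁ := by
      intro z hz
      have hfac : (z - ξ₀) * (z - ξ₁) = 0 := by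
        rw [hξ₁]; linear_combination hz - hroot₀
      rcases mul_eq_zero.mp hfac with h | h
      · left; exact sub_eq_zero.mp h
      · right; exact sub_eq_zero.mp h
    rcases lt_trichotomy (‖ξ₀‖) 1 with h | h | h
    · have h1 : 1 < ‖ξ₁‖ := by nlinarith
      refine ⟨ξ₀, ξ₁, ?_, hroot₀, hroot₁, h, h1, hprod, huniq⟩
      intro heq; rw [heq] at h; linarith
    · exact absurd h (key ξ₀ hroot₀)
    · have h1pos : 0 < ‖ξ₁‖ := by nlinarith
      have h1 : ‖ξ₁‖ < 1 := by nlinarith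
      refine ⟨ξ₁, ξ₀, ?_, hroot₁, hroot₀, h1, h, by rw [mul_comm]; exact hprod, ?_⟩
      · intro heq; rw [heq] at h1; linarith
      · intro z hz; rcases huniq z hz with h' | h'
        · right; exact h'
        · left; exact h'
  · intro γ u _ hγ hu hE ξf hξf
    have hu2 : u ^ 2 = 1 := by rw [hu]; split_ifs <;> norm_num
    have habsu : |u| = 1 := by rw [hu]; split_ifs <;> norm_num
    set c : ℂ := (u : ℂ) * Real.exp (-γ) with hc
    set C : ℂ := (u : ℂ) * Real.exp γ with hC
    have hexp1 : 1 < Real.exp γ := by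
      nlinarith [Real.add_one_lt_exp (ne_of_gt hγ)]
    have hCabs : ‖C‖ = Real.exp γ := by
      rw [hC, norm_mul, Complex.norm_real, Complex.norm_real, Real.norm_eq_abs, Real.norm_eq_abs, habsu,
        abs_of_pos (Real.exp_pos γ), one_mul]
    have hsumr : u * Real.exp (-γ) + u * Real.exp γ = lam - E := by
      rw [Real.cosh_eq] at hE; linear_combination hE
    have hsumc : c + C = (lam : ℂ) - (E : ℂ) := by
      rw [hc, hC]; exact_mod_cast hsumr
    have hprodc : c * C = 1 := by
      have h1 : Real.exp (-γ) * Real.exp γ = 1 := by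
        rw [← Real.exp_add]; simp
      have hr : u * Real.exp (-γ) * (u * Real.exp γ) = 1 := by
        linear_combination (Real.exp (-γ) * Real.exp γ) * hu2 + h1
      rw [hc, hC]; exact_mod_cast hr
    -- quantitative bound
    have hbound : ∀ ε : ℝ, ε ≠ 0 →
        ‖ξf ε - c‖ ≤ |ε| / (Real.exp γ - 1) := by
      intro ε hε
      obtain ⟨hroot, habs⟩ := hξf ε hε
      set z := ξf ε with hz
      have hiden : (z - c) * (z - C) = -((ε : ℂ) * Complex.I) * z := by
        linear_combination hroot + hprodc - z * hsumc
      have habs' : ‖(z - c) * (z - C)‖ = |ε| * ‖z‖ := by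
        rw [hiden]; simp [norm_mul, Complex.norm_real]
      have hzC : Real.exp γ - 1 ≤ ‖z - C‖ := by
        have h1 : ‖C‖ - ‖z‖ ≤ ‖z - C‖ := by
          have := norm_sub_norm_le C z
          rw [norm_sub_rev C z] at this
          simpa using this
        rw [hCabs] at h1
        linarith
      have hzc : ‖z - c‖ * ‖z - C‖ ≤ |ε| := by
        rw [← norm_mul, habs']
        have : ‖z‖ ≤ 1 := le_of_lt habs
        nlinarith [abs_nonneg ε]
      have hpos : 0 < Real.exp γ - 1 := by linarith
      rw [le_div_iff₀ hpos]
      calc ‖z - c‖ * (Real.exp γ - 1)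
          ≤ ‖z - c‖ * ‖z - C‖ := by
            have := norm_nonneg (z - c)
            nlinarith
        _ ≤ |ε| := hzc
    -- conclude
    have hpos : 0 < Real.exp γ - 1 := by linarith
    have hg : Tendsto (fun ε : ℝ => |ε| / (Real.exp γ - 1)) (𝓝[≠] (0 : ℝ)) (𝓝 0) := by
      have h1 : Tendsto (fun ε : ℝ => |ε| / (Real.exp γ - 1)) (𝓝 (0 : ℝ)) (𝓝 0) := by
        have := (continuous_abs.tendsto (0 : ℝ)).div_const (Real.exp γ - 1)
        simpa using this
      exact h1.mono_left nhdsWithin_le_nhds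
    have hsq : Tendsto (fun ε : ℝ => ξf ε - c) (𝓝[≠] (0 : ℝ)) (𝓝 0) := by
      apply squeeze_zero_norm' ?_ hg
      filter_upwards [self_mem_nhdsWithin] with ε hε
      exact hbound ε hε
    have := hsq.add_const c
    simpa using this
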